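/- (Lemma A.2: per-class error bound.) Let ν be a probability measure on X concentrated on the event {x : y(x) = i} for a class i, and let h, h_pl : X → {1,…,C} be measurable classifiers. If ν(M1^i) + ν(M2^i) ≤ q for some q > 0, then ε_ν(h) ≤ ν{x : h(x) ≠ h_pl(x)} − ε_ν(h_pl) + 2q. -/

import Mathlib

open MeasureTheory Set

/-- Lemma A.2: per-class error bound.
Let ν be a probability measure concentrated on {y = i}. If ν(M1^i) + ν(M2^i) ≤ q with q > 0,
then ε_ν(h) ≤ ν{h ≠ h_pl} − ε_ν(h_pl) + 2q. -/
theorem stmt_4 {C : ℕ} {X : Type*} [MeasurableSpace X]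
    (ν : Measure X) [IsProbabilityMeasure ν]
    (y : X → Fin C) (hy : Measurable y) (i : Fin C)
    (hconc : ν {x | y x ≠ i} = 0)
    (h h_pl : X → Fin C) (hh : Measurable h) (hhpl : Measurable h_pl)
    (q : ℝ) (hq : 0 < q)
    (hM12 : (ν {x | h x = h_pl x ∧ h x ≠ i}).toReal +
      (ν {x | h x ≠ h_pl x ∧ h x ≠ i ∧ h_pl x ≠ i}).toReal ≤ q) :
    (ν {x | h x ≠ y x}).toReal ≤
      (ν {x | h x ≠ h_pl x}).toReal - (ν {x | h_pl x ≠ y x}).toReal + 2 * q := by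
  set M1 := {x | h x = h_pl x ∧ h x ≠ i} with hM1
  set M2 := {x | h x ≠ h_pl x ∧ h x ≠ i ∧ h_pl x ≠ i} with hM2
  set M3 := {x | h x ≠ h_pl x ∧ h x ≠ i ∧ h_pl x = i} with hM3
  set S := {x | h x ≠ h_pl x ∧ h x = i ∧ h_pl x ≠ i} with hS
  -- equality of error sets up to null set
  have key : ∀ f : X → Fin C, ν {x | f x ≠ y x} = ν {x | f x ≠ i} := by
    intro f
    apply le_antisymm
    · calc ν {x | f x ≠ y x} ≤ ν ({x | f x ≠ i} ∪ {x | y x ≠ i}) := by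
            apply measure_mono
            intro x hx
            by_cases hfi : f x = i
            · right; intro hyi; exact hx (hfi.trans hyi.symm)
            · left; exact hfi
        _ ≤ ν {x | f x ≠ i} + ν {x | y x ≠ i} := measure_union_le _ _
        _ = ν {x | f x ≠ i} := by rw [hconc, add_zero]
    · calc ν {x | f x ≠ i} ≤ ν ({x | f x ≠ y x} ∪ {x | y x ≠ i}) := by
            apply measure_mono
            intro x hx
            by_cases hfy : f x = y x
            · right; intro hyi; exact hx (hfy.trans hyi)
            · left; exact hfy
        _ ≤ ν {x | f x ≠ y x} + ν {x | y x ≠ i} := measure_union_le _ _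
        _ = ν {x | f x ≠ y x} := by rw [hconc, add_zero]
  have hEh : ν {x | h x ≠ i} ≤ ν M1 + ν M2 + ν M3 := by
    calc ν {x | h x ≠ i} ≤ ν (M1 ∪ M2 ∪ M3) := by
          apply measure_mono
          intro x hx
          by_cases h1 : h x = h_pl x
          · left; left; exact ⟨h1, hx⟩
          · by_cases h2 : h_pl x = i
            · right; exact ⟨h1, hx, h2⟩
            · left; right; exact ⟨h1, hx, h2⟩
      _ ≤ ν (M1 ∪ M2) + ν M3 := measure_union_le _ _
      _ ≤ ν M1 + ν M2 + ν M3 := add_le_add_left (measure_union_le _ _) _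
  have hEpl : ν {x | h_pl x ≠ i} ≤ ν M1 + ν M2 + ν S := by
    calc ν {x | h_pl x ≠ i} ≤ ν (M1 ∪ M2 ∪ S) := by
          apply measure_mono
          intro x hx
          by_cases h1 : h x = h_pl x
          · left; left; exact ⟨h1, h1.symm ▸ hx⟩
          · by_cases h2 : h x = i
            · right; exact ⟨h1, h2, hx⟩
            · left; right; exact ⟨h1, h2, hx⟩
      _ ≤ ν (M1 ∪ M2) + ν S := measure_union_le _ _
      _ ≤ ν M1 + ν M2 + ν S := add_le_add_left (measure_union_le _ _) _
  have hdisj : Disjoint M3 S := by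
    rw [Set.disjoint_left]
    intro x h3 hs
    exact hs.2.2 h3.2.2
  have hA : ν M3 + ν S ≤ ν {x | h x ≠ h_pl x} := by
    rw [← measure_union hdisj]
    · apply measure_mono
      rintro x (hx | hx)
      · exact hx.1
      · exact hx.1
    · have hSeq : S = h ⁻¹' {i} ∩ (h_pl ⁻¹' {i})ᶜ := by
        ext x
        simp only [hS, Set.mem_setOf_eq, Set.mem_inter_iff, Set.mem_preimage,
          Set.mem_singleton_iff, Set.mem_compl_iff]
        constructor
        · rintro ⟨_, h2, h3⟩; exact ⟨h2, h3⟩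
        · rintro ⟨h2, h3⟩; exact ⟨fun e => h3 (e ▸ h2), h2, h3⟩
      rw [hSeq]
      exact (hh (MeasurableSet.singleton i)).inter (hhpl (MeasurableSet.singleton i)).compl
  -- convert to reals
  have fin : ∀ s : Set X, ν s ≠ ⊤ := fun s => measure_ne_top ν s
  have t1 : (ν {x | h x ≠ i}).toReal ≤ (ν M1).toReal + (ν M2).toReal + (ν M3).toReal := by
    have := ENNReal.toReal_mono (by simp [fin]) hEh
    rwa [ENNReal.toReal_add (by simp [fin]) (fin _), ENNReal.toReal_add (fin _) (fin _)] at this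
  have t2 : (ν {x | h_pl x ≠ i}).toReal ≤ (ν M1).toReal + (ν M2).toReal + (ν S).toReal := by
    have := ENNReal.toReal_mono (by simp [fin]) hEpl
    rwa [ENNReal.toReal_add (by simp [fin]) (fin _), ENNReal.toReal_add (fin _) (fin _)] at this
  have t3 : (ν M3).toReal + (ν S).toReal ≤ (ν {x | h x ≠ h_pl x}).toReal := by
    have := ENNReal.toReal_mono (fin _) hA
    rwa [ENNReal.toReal_add (fin _) (fin _)] at this
  rw [key h, key h_pl]
  linarith [hM12, t1, t2, t3]
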